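/- For m < n in {0,...,p} and 0 < k < p+1, the symmetric group S_{p+1} (acting on {0,...,p}) contains disjoint subsets S(k−1 ↦ m,n) := {σ : σ(k−1)=m, σ(k)=n} and S(k−1 ↦ n,m) := {σ : σ(k−1)=n, σ(k)=m}, each in bijection with S_{p−1}, and for σ in S(k−1 ↦ m,n) factored as σ = σ″ ∘ σ^{k−1}_{m,n}, the sign satisfies sgn(σ) = (−1)^{m+n+2k−1} · sgn(σ″) where σ″ is the induced permutation of the remaining p−1 letters. -/

import Mathlib

namespace ConsecAux

variable {q : ℕ}

/-- The one-point shuffle: sends `t ↦ x` and is monotone on the complement. -/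
def shuffle (t x : Fin (q + 1)) : Equiv.Perm (Fin (q + 1)) :=
  (Fin.cycleRange x)⁻¹ * Fin.cycleRange t

@[simp] lemma shuffle_apply_self (t x : Fin (q + 1)) : shuffle t x t = x := by
  simp only [shuffle, Equiv.Perm.mul_apply, Fin.cycleRange_self]
  rw [Equiv.Perm.inv_eq_iff_eq, Fin.cycleRange_self]

@[simp] lemma shuffle_succAbove (t x : Fin (q + 1)) (j : Fin q) :
    shuffle t x (t.succAbove j) = x.succAbove j := by
  simp only [shuffle, Equiv.Perm.mul_apply, Fin.cycleRange_succAbove]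
  rw [Equiv.Perm.inv_eq_iff_eq, Fin.cycleRange_succAbove]

lemma sign_shuffle (t x : Fin (q + 1)) :
    Equiv.Perm.sign (shuffle t x) = (-1 : ℤˣ) ^ ((x : ℕ) + (t : ℕ)) := by
  simp [shuffle, pow_add]

lemma range_trans (t : Fin (q + 2)) (s : Fin (q + 1)) :
    Set.range ⇑(s.succAboveOrderEmb.trans t.succAboveOrderEmb) =
      ({t.succAbove s, t} : Set (Fin (q + 2)))ᶜ := by
  ext z
  simp only [Set.mem_range, Set.mem_compl_iff, Set.mem_insert_iff, Set.mem_singleton_iff, not_or,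
    RelEmbedding.coe_trans, Function.comp_apply, Fin.succAboveOrderEmb_apply]
  constructor
  · rintro ⟨j, rfl⟩
    exact ⟨fun h => (s.succAbove_ne j) (Fin.succAbove_right_injective h), t.succAbove_ne _⟩
  · rintro ⟨h1, h2⟩
    obtain ⟨y, rfl⟩ := Fin.exists_succAbove_eq h2
    obtain ⟨j, rfl⟩ := Fin.exists_succAbove_eq (fun h : y = s => h1 (by rw [h]))
    exact ⟨j, rfl⟩

lemma subset_equiv {N P : ℕ} (a b x y : Fin N) (τ0 : Equiv.Perm (Fin N))
    (hτa : τ0 a = x) (hτb : τ0 b = y)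
    (e : {z : Fin N // z ≠ a ∧ z ≠ b} ≃ Fin P) :
    Nonempty (({σ : Equiv.Perm (Fin N) | σ a = x ∧ σ b = y} : Set (Equiv.Perm (Fin N)))
      ≃ Equiv.Perm (Fin P)) := by
  have e1 : ({σ : Equiv.Perm (Fin N) | σ a = x ∧ σ b = y} : Set (Equiv.Perm (Fin N)))
      ≃ {σ : Equiv.Perm (Fin N) // σ a = a ∧ σ b = b} :=
    { toFun := fun σ => ⟨τ0⁻¹ * σ.1, by
        obtain ⟨h1, h2⟩ := σ.2
        constructor <;>
          simp [Equiv.Perm.mul_apply, h1, h2, Equiv.Perm.inv_eq_iff_eq, Equiv.symm_apply_eq, hτa, hτb]⟩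
      invFun := fun σ => ⟨τ0 * σ.1, by
        obtain ⟨h1, h2⟩ := σ.2
        constructor <;> simp [Equiv.Perm.mul_apply, h1, h2, hτa, hτb]⟩
      left_inv := fun σ => Subtype.ext (by simp [← mul_assoc])
      right_inv := fun σ => Subtype.ext (by simp [← mul_assoc]) }
  have e2 : {σ : Equiv.Perm (Fin N) // σ a = a ∧ σ b = b}
      ≃ {σ : Equiv.Perm (Fin N) // ∀ z, ¬(z ≠ a ∧ z ≠ b) → σ z = z} := by
    refine Equiv.subtypeEquivRight fun σ => ⟨fun h z hz => ?_, fun h => ⟨h a (by simp), h b (by simp)⟩⟩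
    push_neg at hz
    rcases eq_or_ne z a with rfl | hza
    · exact h.1
    · rw [hz hza]; exact h.2
  exact ⟨e1.trans (e2.trans (((Equiv.Perm.subtypeEquivSubtypePerm
    fun z => z ≠ a ∧ z ≠ b).symm).trans e.permCongr))⟩

end ConsecAux


/-- The subsets `S(k−1 ↦ m,n)` and `S(k−1 ↦ n,m)` of the symmetric group on
`p+2` letters (prescribing the values at two consecutive positions) are
disjoint, each in bijection with the symmetric group on `p` letters, and for
`σ ∈ S(k−1 ↦ m,n)` with residual permutation `σ″` (defined via the
order-preserving bijections of the complements), one has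
`sgn σ = (−1)^{m+n+2k−1}·sgn σ″`.  Here the consecutive positions are
`k.castSucc` and `k.succ` (so the original `k` equals `k.val + 1`). -/
theorem consecutive_value_subsets_sign (p : ℕ) (k : Fin (p + 1))
    (m n : Fin (p + 2)) (hmn : m < n) :
    let S1 : Set (Equiv.Perm (Fin (p + 2))) := {σ | σ k.castSucc = m ∧ σ k.succ = n}
    let S2 : Set (Equiv.Perm (Fin (p + 2))) := {σ | σ k.castSucc = n ∧ σ k.succ = m}
    Disjoint S1 S2 ∧
    Nonempty (S1 ≃ Equiv.Perm (Fin p)) ∧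
    Nonempty (S2 ≃ Equiv.Perm (Fin p)) ∧
    (∀ σ ∈ S1, ∀ d c : Fin p ↪o Fin (p + 2),
      Set.range ⇑d = ({k.castSucc, k.succ} : Set (Fin (p + 2)))ᶜ →
      Set.range ⇑c = ({m, n} : Set (Fin (p + 2)))ᶜ →
      ∀ σ'' : Equiv.Perm (Fin p), (∀ j, σ (d j) = c (σ'' j)) →
        Equiv.Perm.sign σ =
          (-1 : ℤˣ) ^ ((m : ℕ) + (n : ℕ) + 2 * (k : ℕ) + 1) * Equiv.Perm.sign σ'') := by
  intro S1 S2
  have hmn' : m ≠ n := hmn.ne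
  have hm : (m : ℕ) < p + 1 := by
    have h1 : (m : ℕ) < (n : ℕ) := hmn
    have h2 := n.isLt
    omega
  set m' : Fin (p + 1) := ⟨m, hm⟩ with hm'def
  have hm'c : Fin.castSucc m' = m := by ext; rfl
  have hnsm : n.succAbove m' = m := by
    rw [Fin.succAbove_of_castSucc_lt _ _ (by rw [hm'c]; exact hmn), hm'c]
  have hbk : (k.succ).succAbove k = k.castSucc :=
    Fin.succAbove_of_castSucc_lt _ _ (Fin.castSucc_lt_succ (i := k))
  set η : Equiv.Perm (Fin (p + 2)) :=
    (ConsecAux.shuffle k m').viaFintypeEmbedding (Fin.succAboveEmb k.succ) with hη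
  set P0 : Equiv.Perm (Fin (p + 2)) := ConsecAux.shuffle k.succ n * η with hP
  have hη1 : ∀ y, η ((k.succ).succAbove y) = (k.succ).succAbove (ConsecAux.shuffle k m' y) := by
    intro y
    have := Equiv.Perm.viaFintypeEmbedding_apply_image (ConsecAux.shuffle k m')
      (Fin.succAboveEmb k.succ) y
    simpa using this
  have hη2 : η k.succ = k.succ := by
    apply Equiv.Perm.viaFintypeEmbedding_apply_notMem_range
    simp
  have hPb : P0 k.succ = n := by
    rw [hP]
    simp [Equiv.Perm.mul_apply, hη2]
  have hPa : P0 k.castSucc = m := by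
    have h1 : η k.castSucc = (k.succ).succAbove m' := by
      rw [← hbk, hη1 k, ConsecAux.shuffle_apply_self]
    rw [hP]
    simp [Equiv.Perm.mul_apply, h1, ConsecAux.shuffle_succAbove, hnsm]
  have hPd : ∀ j, P0 ((k.succ).succAbove (k.succAbove j)) = n.succAbove (m'.succAbove j) := by
    intro j
    rw [hP]
    simp [Equiv.Perm.mul_apply, hη1, ConsecAux.shuffle_succAbove]
  have hsign : Equiv.Perm.sign P0 = (-1 : ℤˣ) ^ ((m : ℕ) + (n : ℕ) + 2 * (k : ℕ) + 1) := by
    rw [hP, Equiv.Perm.sign_mul, hη, Equiv.Perm.viaFintypeEmbedding_sign,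
      ConsecAux.sign_shuffle, ConsecAux.sign_shuffle, ← pow_add]
    congr 1
    simp only [Fin.val_succ]
    show (n : ℕ) + ((k : ℕ) + 1) + ((m : ℕ) + (k : ℕ)) = (m : ℕ) + (n : ℕ) + 2 * (k : ℕ) + 1
    omega
  -- the canonical order embeddings
  set T : Fin p ↪o Fin (p + 2) := k.succAboveOrderEmb.trans (k.succ).succAboveOrderEmb with hT
  set T' : Fin p ↪o Fin (p + 2) := m'.succAboveOrderEmb.trans n.succAboveOrderEmb with hT'
  have hTapp : ∀ j, T j = (k.succ).succAbove (k.succAbove j) := fun j => rfl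
  have hT'app : ∀ j, T' j = n.succAbove (m'.succAbove j) := fun j => rfl
  have hrd : Set.range ⇑T = ({k.castSucc, k.succ} : Set (Fin (p + 2)))ᶜ := by
    rw [hT, ConsecAux.range_trans, hbk]
  have hrc : Set.range ⇑T' = ({m, n} : Set (Fin (p + 2)))ᶜ := by
    rw [hT', ConsecAux.range_trans, hnsm]
  have hne : ∀ j : Fin p, T j ≠ k.castSucc ∧ T j ≠ k.succ := by
    intro j
    have : T j ∈ ({k.castSucc, k.succ} : Set (Fin (p + 2)))ᶜ := hrd ▸ Set.mem_range_self j
    simpa [not_or] using this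
  have e : {z : Fin (p + 2) // z ≠ k.castSucc ∧ z ≠ k.succ} ≃ Fin p := by
    refine (Equiv.ofBijective (fun j => ⟨T j, hne j⟩) ⟨?_, ?_⟩).symm
    · intro i j hij
      exact T.injective (congrArg Subtype.val hij)
    · rintro ⟨z, hz1, hz2⟩
      have : z ∈ Set.range ⇑T := by rw [hrd]; simp [hz1, hz2]
      obtain ⟨j, hj⟩ := this
      exact ⟨j, Subtype.ext hj⟩
  refine ⟨?_, ?_, ?_, ?_⟩
  · rw [Set.disjoint_left]
    rintro σ ⟨h1, -⟩ ⟨h2, -⟩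
    exact hmn' (h1.symm.trans h2)
  · exact ConsecAux.subset_equiv _ _ _ _ P0 hPa hPb e
  · refine ConsecAux.subset_equiv _ _ _ _ (Equiv.swap m n * P0) ?_ ?_ e
    · rw [Equiv.Perm.mul_apply, hPa, Equiv.swap_apply_left]
    · rw [Equiv.Perm.mul_apply, hPb, Equiv.swap_apply_right]
  · rintro σ ⟨hσ1, hσ2⟩ d c hd hc σ'' hσ''
    have hd0 : ⇑d = ⇑T :=
      (d.strictMono.range_inj T.strictMono).mp (hd.trans hrd.symm)
    have hc0 : ⇑c = ⇑T' :=
      (c.strictMono.range_inj T'.strictMono).mp (hc.trans hrc.symm)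
    have hPdj : ∀ j, P0 (d j) = c j := by
      intro j
      rw [hd0, hc0, hTapp, hT'app]
      exact hPd j
    set τ : Equiv.Perm (Fin (p + 2)) := σ * P0⁻¹ with hτdef
    have hτ : τ = σ''.viaFintypeEmbedding (RelEmbedding.toEmbedding c) := by
      ext z
      by_cases hz : z ∈ Set.range ⇑c
      · obtain ⟨j, rfl⟩ := hz
        have h1 : P0⁻¹ (c j) = d j := by
          rw [Equiv.Perm.inv_eq_iff_eq]; exact (hPdj j).symm
        have h2 : σ''.viaFintypeEmbedding (RelEmbedding.toEmbedding c) (c j) = c (σ'' j) := by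
          have := Equiv.Perm.viaFintypeEmbedding_apply_image σ'' (RelEmbedding.toEmbedding c) j
          simpa using this
        rw [hτdef, h2, Equiv.Perm.mul_apply, h1, hσ'' j]
      · have h2 : σ''.viaFintypeEmbedding (RelEmbedding.toEmbedding c) z = z :=
          Equiv.Perm.viaFintypeEmbedding_apply_notMem_range _ _ (by simpa using hz)
        rw [hc] at hz
        simp only [Set.mem_compl_iff, Set.mem_insert_iff, Set.mem_singleton_iff, not_or,
          not_not, not_and_or] at hz
        rw [hτdef, h2, Equiv.Perm.mul_apply]
        rcases hz with rfl | rfl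
        · rw [Equiv.Perm.inv_eq_iff_eq.mpr hPa.symm, hσ1]
        · rw [Equiv.Perm.inv_eq_iff_eq.mpr hPb.symm, hσ2]
    have hστ : σ = τ * P0 := by rw [hτdef]; simp [mul_assoc]
    rw [hστ, Equiv.Perm.sign_mul, hτ, Equiv.Perm.viaFintypeEmbedding_sign, hsign, mul_comm]
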